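/- arXiv:2303.07178 — 2 statements merged into one kernel-verified Lean document; each statement's English description precedes it below -/
import Mathlib

section
/- Let $k \ge 0$ be an integer and $\alpha \in (0,1)$. Define, for $r, r+h > 0$ and $\tilde\theta \in (-\pi, \pi)$ with $(h, \tilde\theta) \ne (0,0)$, $\Phi(\tilde\theta) = \left(h^2 + 2r(r+h)(1-\cos\tilde\theta)\right)^{-(2-\alpha)/2}$. Then the $k$-th derivative of $\Phi$ has the form $\Phi^{(k)}(\tilde\theta) = \sum_{i=1}^{k} \frac{((r+h)r)^i P_{k,i}(\tilde\theta)}{\left(h^2 + 2r(r+h)(1-\cos\tilde\theta)\right)^{(2+2i-\alpha)/2}}$ for $k \ge 1$, where each $P_{k,i}$ is a finite linear combination of terms $(\cos\tilde\theta)^j(\sin\tilde\theta)^l$ with $j + l = i$ and $l \ge 2i - k$. -/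
open Real Finset

namespace Stmt9Aux

noncomputable def A (r h t : ℝ) : ℝ := h ^ 2 + 2 * r * (r + h) * (1 - Real.cos t)
noncomputable def q (α : ℝ) (i : ℕ) : ℝ := -((2 + 2 * (i : ℝ) - α) / 2)
noncomputable def T (α r h : ℝ) (i j l : ℕ) (θ : ℝ) : ℝ :=
  ((r + h) * r) ^ i * Real.cos θ ^ j * Real.sin θ ^ l * A r h θ ^ q α i

noncomputable def next (α : ℝ) (c : ℕ → ℕ → ℕ → ℝ) (i j l : ℕ) : ℝ :=
  (if 1 ≤ l then -(((j + 1 : ℕ)) : ℝ) * c i (j + 1) (l - 1) else 0)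
  + (if 1 ≤ j then (((l + 1 : ℕ)) : ℝ) * c i (j - 1) (l + 1) else 0)
  + (if 1 ≤ i ∧ 1 ≤ l then (α - 2 * (i : ℝ)) * c (i - 1) j (l - 1) else 0)

theorem hasDerivAt_A (r h t : ℝ) :
    HasDerivAt (A r h) (2 * r * (r + h) * Real.sin t) t := by
  have h1 := (((hasDerivAt_cos t).const_sub 1).const_mul (2 * r * (r + h))).const_add (h ^ 2)
  refine h1.congr_deriv ?_
  ring

theorem hasDerivAt_T (α r h : ℝ) (i j l : ℕ) {θ : ℝ} (hA : 0 < A r h θ) :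
    HasDerivAt (fun t => T α r h i j l t)
      (-(j : ℝ) * T α r h i (j - 1) (l + 1) θ + (l : ℝ) * T α r h i (j + 1) (l - 1) θ
        + (α - 2 - 2 * (i : ℝ)) * T α r h (i + 1) j (l + 1) θ) θ := by
  have hq1 : q α i - 1 = q α (i + 1) := by simp only [q]; push_cast; ring
  have hq2 : q α i = (α - 2 - 2 * (i : ℝ)) / 2 := by simp only [q]; ring
  have hu : HasDerivAt (fun t => ((r + h) * r) ^ i * Real.cos t ^ j)
      (((r + h) * r) ^ i * ((j : ℝ) * Real.cos θ ^ (j - 1) * (-Real.sin θ))) θ :=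
    ((hasDerivAt_cos θ).pow j).const_mul _
  have hv : HasDerivAt (fun t => Real.sin t ^ l)
      ((l : ℝ) * Real.sin θ ^ (l - 1) * Real.cos θ) θ := (hasDerivAt_sin θ).pow l
  have hw : HasDerivAt (fun t => A r h t ^ q α i)
      (2 * r * (r + h) * Real.sin θ * q α i * A r h θ ^ (q α i - 1)) θ :=
    (hasDerivAt_A r h θ).rpow_const (Or.inl hA.ne')
  rw [hq1] at hw
  have hT := (hu.mul hv).mul hw
  refine hT.congr_deriv ?_
  simp only [T, Pi.mul_apply]
  rw [hq2]
  ring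

theorem sum_shift (g : ℕ → ℝ) (N : ℕ) (h0 : g 0 = 0) (hN : g N = 0) :
    ∑ l ∈ range N, g l = ∑ l ∈ range N, g (l + 1) := by
  have h1 := Finset.sum_range_succ' g N
  rw [Finset.sum_range_succ, h0, hN] at h1
  linarith

theorem sum_ext2 (d : ℕ → ℕ → ℝ) (f : ℕ → ℕ → ℝ) {N M : ℕ} (hNM : N ≤ M)
    (hd : ∀ j l, d j l ≠ 0 → j < N ∧ l < N) :
    ∑ j ∈ range N, ∑ l ∈ range N, d j l * f j l
      = ∑ j ∈ range M, ∑ l ∈ range M, d j l * f j l := by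
  have hsub : range N ⊆ range M := Finset.range_subset_range.2 hNM
  calc ∑ j ∈ range N, ∑ l ∈ range N, d j l * f j l
      = ∑ j ∈ range N, ∑ l ∈ range M, d j l * f j l := by
        apply Finset.sum_congr rfl; intro j _
        apply Finset.sum_subset hsub
        intro l _ hl
        have hz : d j l = 0 := by
          by_contra hne; exact hl (Finset.mem_range.2 (hd j l hne).2)
        simp [hz]
    _ = ∑ j ∈ range M, ∑ l ∈ range M, d j l * f j l := by
        apply Finset.sum_subset hsub
        intro j _ hj
        apply Finset.sum_eq_zero; intro l _
        have hz : d j l = 0 := by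
          by_contra hne; exact hj (Finset.mem_range.2 (hd j l hne).1)
        simp [hz]

theorem sum_ext (c : ℕ → ℕ → ℕ → ℝ) (f : ℕ → ℕ → ℕ → ℝ) {N M : ℕ} (hNM : N ≤ M)
    (hc : ∀ i j l, c i j l ≠ 0 → i < N ∧ j < N ∧ l < N) :
    ∑ i ∈ range N, ∑ j ∈ range N, ∑ l ∈ range N, c i j l * f i j l
      = ∑ i ∈ range M, ∑ j ∈ range M, ∑ l ∈ range M, c i j l * f i j l := by
  have hsub : range N ⊆ range M := Finset.range_subset_range.2 hNM
  calc ∑ i ∈ range N, ∑ j ∈ range N, ∑ l ∈ range N, c i j l * f i j l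
      = ∑ i ∈ range N, ∑ j ∈ range M, ∑ l ∈ range M, c i j l * f i j l := by
        apply Finset.sum_congr rfl; intro i _
        exact sum_ext2 (c i) (f i) hNM (fun j l hne => ⟨(hc i j l hne).2.1, (hc i j l hne).2.2⟩)
    _ = ∑ i ∈ range M, ∑ j ∈ range M, ∑ l ∈ range M, c i j l * f i j l := by
        apply Finset.sum_subset hsub
        intro i _ hi
        apply Finset.sum_eq_zero; intro j _
        apply Finset.sum_eq_zero; intro l _
        have hz : c i j l = 0 := by
          by_contra hne; exact hi (Finset.mem_range.2 (hc i j l hne).1)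
        simp [hz]

theorem piece1 (α r h : ℝ) (c : ℕ → ℕ → ℕ → ℝ) (N : ℕ) (θ : ℝ)
    (hc : ∀ i j l, c i j l ≠ 0 → i + 1 < N ∧ j + 1 < N ∧ l + 1 < N) (i : ℕ) :
    ∑ j ∈ range N, ∑ l ∈ range N,
        (if 1 ≤ l then -(((j + 1 : ℕ)) : ℝ) * c i (j + 1) (l - 1) else 0) * T α r h i j l θ
      = ∑ j ∈ range N, ∑ l ∈ range N, c i j l * (-(j : ℝ) * T α r h i (j - 1) (l + 1) θ) := by
  have step_l : ∀ j : ℕ, ∑ l ∈ range N,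
      (if 1 ≤ l then -(((j + 1 : ℕ)) : ℝ) * c i (j + 1) (l - 1) else 0) * T α r h i j l θ
      = ∑ l ∈ range N, -(((j + 1 : ℕ)) : ℝ) * c i (j + 1) l * T α r h i j (l + 1) θ := by
    intro j
    rw [sum_shift _ N (by simp) ?hN]
    case hN =>
      have hz : c i (j + 1) (N - 1) = 0 := by
        by_contra hne; have := (hc _ _ _ hne).2.2; omega
      simp [hz]
    apply Finset.sum_congr rfl; intro l _
    rw [if_pos (Nat.le_add_left 1 l), Nat.add_sub_cancel]
  rw [Finset.sum_congr rfl (fun j _ => step_l j)]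
  have h0 : ∑ l ∈ range N, c i 0 l * (-((0 : ℕ) : ℝ) * T α r h i (0 - 1) (l + 1) θ) = 0 := by
    simp
  have hN' : ∑ l ∈ range N, c i N l * (-((N : ℕ) : ℝ) * T α r h i (N - 1) (l + 1) θ) = 0 := by
    apply Finset.sum_eq_zero; intro l _
    have hz : c i N l = 0 := by by_contra hne; have := (hc _ _ _ hne).2.1; omega
    simp [hz]
  rw [sum_shift (fun j => ∑ l ∈ range N, c i j l * (-(j : ℝ) * T α r h i (j - 1) (l + 1) θ))
    N h0 hN']
  apply Finset.sum_congr rfl; intro j _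
  apply Finset.sum_congr rfl; intro l _
  push_cast [Nat.add_sub_cancel]
  ring

theorem piece2 (α r h : ℝ) (c : ℕ → ℕ → ℕ → ℝ) (N : ℕ) (θ : ℝ)
    (hc : ∀ i j l, c i j l ≠ 0 → i + 1 < N ∧ j + 1 < N ∧ l + 1 < N) (i : ℕ) :
    ∑ j ∈ range N, ∑ l ∈ range N,
        (if 1 ≤ j then (((l + 1 : ℕ)) : ℝ) * c i (j - 1) (l + 1) else 0) * T α r h i j l θ
      = ∑ j ∈ range N, ∑ l ∈ range N, c i j l * ((l : ℝ) * T α r h i (j + 1) (l - 1) θ) := by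
  rw [sum_shift (fun j => ∑ l ∈ range N,
      (if 1 ≤ j then (((l + 1 : ℕ)) : ℝ) * c i (j - 1) (l + 1) else 0) * T α r h i j l θ) N
      (by simp) ?hN]
  case hN =>
    apply Finset.sum_eq_zero; intro l _
    have hz : c i (N - 1) (l + 1) = 0 := by
      by_contra hne; have := (hc _ _ _ hne).2.1; omega
    simp [hz]
  apply Finset.sum_congr rfl; intro j _
  simp only [if_pos (Nat.le_add_left 1 j), Nat.add_sub_cancel]
  rw [sum_shift (fun l => c i j l * ((l : ℝ) * T α r h i (j + 1) (l - 1) θ)) N (by simp) ?hN2]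
  case hN2 =>
    have hz : c i j N = 0 := by by_contra hne; have := (hc _ _ _ hne).2.2; omega
    simp [hz]
  apply Finset.sum_congr rfl; intro l _
  push_cast [Nat.add_sub_cancel]
  ring

theorem piece3 (α r h : ℝ) (c : ℕ → ℕ → ℕ → ℝ) (N : ℕ) (θ : ℝ)
    (hc : ∀ i j l, c i j l ≠ 0 → i + 1 < N ∧ j + 1 < N ∧ l + 1 < N) :
    ∑ i ∈ range N, ∑ j ∈ range N, ∑ l ∈ range N,
        (if 1 ≤ i ∧ 1 ≤ l then (α - 2 * (i : ℝ)) * c (i - 1) j (l - 1) else 0) * T α r h i j l θ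
      = ∑ i ∈ range N, ∑ j ∈ range N, ∑ l ∈ range N,
          c i j l * ((α - 2 - 2 * (i : ℝ)) * T α r h (i + 1) j (l + 1) θ) := by
  rw [sum_shift (fun i => ∑ j ∈ range N, ∑ l ∈ range N,
      (if 1 ≤ i ∧ 1 ≤ l then (α - 2 * (i : ℝ)) * c (i - 1) j (l - 1) else 0) * T α r h i j l θ)
      N (by simp) ?hN]
  case hN =>
    apply Finset.sum_eq_zero; intro j _
    apply Finset.sum_eq_zero; intro l _
    have hz : c (N - 1) j (l - 1) = 0 := by
      by_contra hne; have := (hc _ _ _ hne).1; omega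
    simp [hz]
  apply Finset.sum_congr rfl; intro i _
  apply Finset.sum_congr rfl; intro j _
  simp only [Nat.le_add_left, true_and, Nat.add_sub_cancel]
  rw [sum_shift (fun l => (if 1 ≤ l then (α - 2 * (((i + 1) : ℕ) : ℝ)) * c i j (l - 1) else 0)
      * T α r h (i + 1) j l θ) N (by simp) ?hN3]
  case hN3 =>
    have hz : c i j (N - 1) = 0 := by
      by_contra hne; have := (hc _ _ _ hne).2.2; omega
    simp [hz]
  apply Finset.sum_congr rfl; intro l _
  simp only [if_pos (Nat.le_add_left 1 l), Nat.add_sub_cancel]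
  push_cast
  ring

theorem deriv_sum_eq (α r h : ℝ) (c : ℕ → ℕ → ℕ → ℝ) (N : ℕ) (θ : ℝ)
    (hc : ∀ i j l, c i j l ≠ 0 → i + 1 < N ∧ j + 1 < N ∧ l + 1 < N) :
    ∑ i ∈ range N, ∑ j ∈ range N, ∑ l ∈ range N, c i j l *
        (-(j : ℝ) * T α r h i (j - 1) (l + 1) θ + (l : ℝ) * T α r h i (j + 1) (l - 1) θ
          + (α - 2 - 2 * (i : ℝ)) * T α r h (i + 1) j (l + 1) θ)
    = ∑ i ∈ range N, ∑ j ∈ range N, ∑ l ∈ range N, next α c i j l * T α r h i j l θ := by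
  simp only [next, add_mul, mul_add, Finset.sum_add_distrib]
  rw [Finset.sum_congr rfl (fun i (_ : i ∈ range N) => piece1 α r h c N θ hc i),
    Finset.sum_congr rfl (fun i (_ : i ∈ range N) => piece2 α r h c N θ hc i),
    piece3 α r h c N θ hc]

theorem hasDerivAt_S (α r h : ℝ) (c : ℕ → ℕ → ℕ → ℝ) (N : ℕ) {θ : ℝ} (hA : 0 < A r h θ) :
    HasDerivAt (fun t => ∑ i ∈ range N, ∑ j ∈ range N, ∑ l ∈ range N, c i j l * T α r h i j l t)
      (∑ i ∈ range N, ∑ j ∈ range N, ∑ l ∈ range N, c i j l *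
        (-(j : ℝ) * T α r h i (j - 1) (l + 1) θ + (l : ℝ) * T α r h i (j + 1) (l - 1) θ
          + (α - 2 - 2 * (i : ℝ)) * T α r h (i + 1) j (l + 1) θ)) θ := by
  apply HasDerivAt.fun_sum; intro i _
  apply HasDerivAt.fun_sum; intro j _
  apply HasDerivAt.fun_sum; intro l _
  exact (hasDerivAt_T α r h i j l hA).const_mul _

theorem good_next {α : ℝ} {k : ℕ} {c : ℕ → ℕ → ℕ → ℝ}
    (hg : ∀ i j l, c i j l ≠ 0 →
      j + l = i ∧ 2 * (i : ℤ) - (k : ℤ) ≤ (l : ℤ) ∧ 1 ≤ i ∧ i ≤ k) :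
    ∀ i j l, next α c i j l ≠ 0 →
      j + l = i ∧ 2 * (i : ℤ) - ((k + 1 : ℕ) : ℤ) ≤ (l : ℤ) ∧ 1 ≤ i ∧ i ≤ k + 1 := by
  intro i j l hne
  have h3 : (if 1 ≤ l then -(((j + 1 : ℕ)) : ℝ) * c i (j + 1) (l - 1) else 0) ≠ 0
      ∨ (if 1 ≤ j then (((l + 1 : ℕ)) : ℝ) * c i (j - 1) (l + 1) else 0) ≠ 0
      ∨ (if 1 ≤ i ∧ 1 ≤ l then (α - 2 * (i : ℝ)) * c (i - 1) j (l - 1) else 0) ≠ 0 := by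
    by_contra hh
    push_neg at hh
    exact hne (by simp only [next, hh.1, hh.2.1, hh.2.2, add_zero])
  rcases h3 with h1 | h1 | h1
  · by_cases hl : 1 ≤ l
    · rw [if_pos hl] at h1
      have hz : c i (j + 1) (l - 1) ≠ 0 := fun hz => h1 (by simp [hz])
      obtain ⟨e1, e2, e3, e4⟩ := hg _ _ _ hz
      omega
    · rw [if_neg hl] at h1; exact absurd rfl h1
  · by_cases hj : 1 ≤ j
    · rw [if_pos hj] at h1
      have hz : c i (j - 1) (l + 1) ≠ 0 := fun hz => h1 (by simp [hz])
      obtain ⟨e1, e2, e3, e4⟩ := hg _ _ _ hz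
      omega
    · rw [if_neg hj] at h1; exact absurd rfl h1
  · by_cases hil : 1 ≤ i ∧ 1 ≤ l
    · rw [if_pos hil] at h1
      have hz : c (i - 1) j (l - 1) ≠ 0 := fun hz => h1 (by simp [hz])
      obtain ⟨e1, e2, e3, e4⟩ := hg _ _ _ hz
      omega
    · rw [if_neg hil] at h1; exact absurd rfl h1

theorem main (α r h : ℝ) : ∀ k : ℕ, 1 ≤ k →
    ∃ c : ℕ → ℕ → ℕ → ℝ,
      (∀ i j l, c i j l ≠ 0 →
        j + l = i ∧ 2 * (i : ℤ) - (k : ℤ) ≤ (l : ℤ) ∧ 1 ≤ i ∧ i ≤ k) ∧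
      ∀ θ : ℝ, 0 < A r h θ →
        iteratedDeriv k
            (fun t : ℝ => (h ^ 2 + 2 * r * (r + h) * (1 - Real.cos t)) ^ (-((2 - α) / 2))) θ
          = ∑ i ∈ range (k + 2), ∑ j ∈ range (k + 2), ∑ l ∈ range (k + 2),
              c i j l * T α r h i j l θ := by
  intro k hk
  induction k, hk using Nat.le_induction with
  | base =>
    refine ⟨fun i j l => if i = 1 ∧ j = 0 ∧ l = 1 then α - 2 else 0, ?_, ?_⟩
    · intro i j l hne
      have hne' : (if i = 1 ∧ j = 0 ∧ l = 1 then α - 2 else 0) ≠ 0 := hne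
      by_cases hh : i = 1 ∧ j = 0 ∧ l = 1
      · obtain ⟨e1, e2, e3⟩ := hh; subst e1; subst e2; subst e3; omega
      · rw [if_neg hh] at hne'; exact absurd rfl hne'
    · intro θ hA
      rw [iteratedDeriv_one]
      have hd : HasDerivAt
          (fun t : ℝ => (h ^ 2 + 2 * r * (r + h) * (1 - Real.cos t)) ^ (-((2 - α) / 2)))
          (2 * r * (r + h) * Real.sin θ * (-((2 - α) / 2))
            * A r h θ ^ (-((2 - α) / 2) - 1)) θ := by
        have hh := (hasDerivAt_A r h θ).rpow_const (p := -((2 - α) / 2)) (Or.inl hA.ne')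
        simpa [A] using hh
      rw [hd.deriv]
      have hsum : ∑ i ∈ range (1 + 2), ∑ j ∈ range (1 + 2), ∑ l ∈ range (1 + 2),
          (if i = 1 ∧ j = 0 ∧ l = 1 then α - 2 else 0) * T α r h i j l θ
          = (α - 2) * T α r h 1 0 1 θ := by
        simp [Finset.sum_range_succ]
      rw [hsum]
      have he : -((2 - α) / 2) - 1 = q α 1 := by simp only [q]; push_cast; ring
      rw [he]
      simp only [T]
      ring
  | succ k hk ih =>
    obtain ⟨c, hg, heq⟩ := ih
    refine ⟨next α c, good_next hg, ?_⟩
    intro θ hA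
    have hsupp : ∀ i j l, c i j l ≠ 0 → i + 1 < k + 3 ∧ j + 1 < k + 3 ∧ l + 1 < k + 3 := by
      intro i j l hne; obtain ⟨e1, e2, e3, e4⟩ := hg _ _ _ hne; omega
    have hsupp2 : ∀ i j l, c i j l ≠ 0 → i < k + 2 ∧ j < k + 2 ∧ l < k + 2 := by
      intro i j l hne; obtain ⟨e1, e2, e3, e4⟩ := hg _ _ _ hne; omega
    have hopen : IsOpen {t : ℝ | 0 < A r h t} := by
      have hcont : Continuous (A r h) := by unfold A; continuity
      exact isOpen_lt continuous_const hcont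
    have hev : iteratedDeriv k
        (fun t : ℝ => (h ^ 2 + 2 * r * (r + h) * (1 - Real.cos t)) ^ (-((2 - α) / 2)))
        =ᶠ[nhds θ] fun t => ∑ i ∈ range (k + 3), ∑ j ∈ range (k + 3), ∑ l ∈ range (k + 3),
          c i j l * T α r h i j l t := by
      filter_upwards [hopen.mem_nhds hA] with t ht
      rw [heq t ht, sum_ext (N := k + 2) (M := k + 3) c (fun i j l => T α r h i j l t) (by omega) hsupp2]
    have hder := (hasDerivAt_S α r h c (k + 3) hA).congr_of_eventuallyEq hev
    have h312 : k + 1 + 2 = k + 3 := by omega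
    rw [h312, iteratedDeriv_succ, hder.deriv]
    exact deriv_sum_eq α r h c (k + 3) θ hsupp

end Stmt9Aux

open Stmt9Aux

/-- Structure of the `k`-th derivative of
`Φ(θ) = (h² + 2r(r+h)(1-cos θ))^{-(2-α)/2}`: it is a sum over `1 ≤ i ≤ k` of terms
`((r+h)r)^i P_{k,i}(θ) (h² + 2r(r+h)(1-cos θ))^{-(2+2i-α)/2}` where each `P_{k,i}` is a
finite linear combination of `(cos θ)^j (sin θ)^l` with `j + l = i` and `l ≥ 2i - k`. -/
theorem stmt9 (α r h : ℝ) (k : ℕ) (hα : α ∈ Set.Ioo (0:ℝ) 1) (hr : 0 < r)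
    (hrh : 0 < r + h) (hk : 1 ≤ k) :
    ∃ c : ℕ → ℕ → ℕ → ℝ,
      (∀ i j l, c i j l ≠ 0 → j + l = i ∧ 2 * (i : ℤ) - (k : ℤ) ≤ (l : ℤ)) ∧
      ∀ θ ∈ Set.Ioo (-π) π, (h ≠ 0 ∨ θ ≠ 0) →
        iteratedDeriv k
            (fun t : ℝ => (h ^ 2 + 2 * r * (r + h) * (1 - Real.cos t)) ^ (-((2 - α) / 2))) θ
          = ∑ i ∈ Finset.Icc 1 k, ((r + h) * r) ^ i *
              (∑ j ∈ Finset.range (k + 1), ∑ l ∈ Finset.range (k + 1),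
                c i j l * Real.cos θ ^ j * Real.sin θ ^ l) *
              (h ^ 2 + 2 * r * (r + h) * (1 - Real.cos θ)) ^ (-((2 + 2 * (i : ℝ) - α) / 2)) := by
  obtain ⟨c, hg, heq⟩ := main α r h k hk
  refine ⟨c, fun i j l hne => ⟨(hg i j l hne).1, (hg i j l hne).2.1⟩, ?_⟩
  intro θ hθ hne0
  have hc1 : Real.cos θ ≤ 1 := Real.cos_le_one θ
  have hA : 0 < A r h θ := by
    obtain ⟨hθ1, hθ2⟩ := hθ
    have hnn : 0 ≤ 2 * r * (r + h) * (1 - Real.cos θ) := by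
      apply mul_nonneg _ (by linarith)
      positivity
    rcases hne0 with hh | hθ0
    · have hp : 0 < h ^ 2 := by positivity
      simp only [A]; linarith
    · have hπ := Real.pi_pos
      have hcos : Real.cos θ < 1 := by
        rcases lt_or_eq_of_le hc1 with hlt | heq1
        · exact hlt
        · exact absurd ((Real.cos_eq_one_iff_of_lt_of_lt (by linarith) (by linarith)).1 heq1) hθ0
      have hpos : 0 < 2 * r * (r + h) * (1 - Real.cos θ) := by
        apply mul_pos _ (by linarith)
        positivity
      have hsq : 0 ≤ h ^ 2 := sq_nonneg h
      simp only [A]; linarith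
  rw [heq θ hA]
  symm
  calc ∑ i ∈ Finset.Icc 1 k, ((r + h) * r) ^ i *
          (∑ j ∈ Finset.range (k + 1), ∑ l ∈ Finset.range (k + 1),
            c i j l * Real.cos θ ^ j * Real.sin θ ^ l) *
          (h ^ 2 + 2 * r * (r + h) * (1 - Real.cos θ)) ^ (-((2 + 2 * (i : ℝ) - α) / 2))
      = ∑ i ∈ Finset.Icc 1 k, ∑ j ∈ range (k + 1), ∑ l ∈ range (k + 1),
          c i j l * T α r h i j l θ := by
        apply Finset.sum_congr rfl; intro i _
        simp only [Finset.mul_sum, Finset.sum_mul]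
        apply Finset.sum_congr rfl; intro j _
        apply Finset.sum_congr rfl; intro l _
        simp only [T, A, q]
        ring
    _ = ∑ i ∈ Finset.Icc 1 k, ∑ j ∈ range (k + 2), ∑ l ∈ range (k + 2),
          c i j l * T α r h i j l θ := by
        apply Finset.sum_congr rfl; intro i hi
        apply sum_ext2 (c i) (fun j l => T α r h i j l θ) (by omega)
        intro j l hne
        obtain ⟨e1, e2, e3, e4⟩ := hg _ _ _ hne
        omega
    _ = ∑ i ∈ range (k + 2), ∑ j ∈ range (k + 2), ∑ l ∈ range (k + 2),
          c i j l * T α r h i j l θ := by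
        apply Finset.sum_subset
        · intro x hx
          simp only [Finset.mem_Icc] at hx
          exact Finset.mem_range.2 (by omega)
        · intro i _ hi
          apply Finset.sum_eq_zero; intro j _
          apply Finset.sum_eq_zero; intro l _
          have hz : c i j l = 0 := by
            by_contra hne
            obtain ⟨e1, e2, e3, e4⟩ := hg _ _ _ hne
            exact hi (Finset.mem_Icc.2 ⟨e3, e4⟩)
          simp [hz]
end

section
/- Let $f : (0,\infty) \to \mathbb{R}$ be continuously differentiable with $M := \sup_r(|f(r)| + |f'(r)|) < \infty$, and suppose $f \ge 0$. If $\int_0^\infty r^{3+2\alpha-2\epsilon} f(r)^2 \cdot r\, dr \le B^2$ for some constants $\alpha, \epsilon, B > 0$ (interpreting the weighted $L^2$ bound $\|r^{1+\alpha-\epsilon} f\|_{L^2(r\,dr)} \le B$), then for every $r_0 \ge 1$, $f(r_0)^3 \le \frac{8 M B^2}{r_0^{3+2\alpha-2\epsilon}}$, i.e. $f(r_0) \le (8MB^2)^{1/3} r_0^{-(3+2\alpha-2\epsilon)/3}$. -/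
open Real MeasureTheory

/-- If `f : (0,∞) → [0,∞)` is `C¹` with `|f| + |f'| ≤ M`, and the weighted `L²` bound
`∫₀^∞ r^{2(1+α-ε)} f(r)² · r dr ≤ B²` holds, then for every `r₀ ≥ 1`,
`f(r₀)³ ≤ 8 M B² / r₀^{3+2α-2ε}`. -/
theorem stmt10 (f : ℝ → ℝ) (M B α ε : ℝ) (hM : 0 < M) (hB : 0 < B) (hα : 0 < α)
    (hε : 0 < ε)
    (hf : ContDiffOn ℝ 1 f (Set.Ioi 0))
    (hpos : ∀ r > (0:ℝ), 0 ≤ f r)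
    (hbound : ∀ r > (0:ℝ), |f r| + |derivWithin f (Set.Ioi 0) r| ≤ M)
    (hL2 : ∫⁻ r in Set.Ioi (0:ℝ),
        ENNReal.ofReal (r ^ (2 * (1 + α - ε)) * f r ^ 2 * r) ≤ ENNReal.ofReal (B ^ 2)) :
    ∀ r₀ ≥ (1:ℝ), f r₀ ^ 3 ≤ 8 * M * B ^ 2 / r₀ ^ (3 + 2 * α - 2 * ε) := by
  intro r₀ hr₀
  have hr₀0 : (0:ℝ) < r₀ := lt_of_lt_of_le one_pos hr₀
  set w : ℝ := 3 + 2 * α - 2 * ε with hw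
  have hrw : (0:ℝ) < r₀ ^ w := Real.rpow_pos_of_pos hr₀0 w
  set c := f r₀ with hc
  have hc0 : 0 ≤ c := hpos r₀ hr₀0
  rcases eq_or_lt_of_le hc0 with h0 | hcpos
  · rw [← h0]
    have : (0:ℝ) < 8 * M * B ^ 2 / r₀ ^ w := by positivity
    simpa using this.le
  -- c ≤ M
  have hcM : c ≤ M := by
    have h := hbound r₀ hr₀0
    have := abs_nonneg (derivWithin f (Set.Ioi 0) r₀)
    have hac : |f r₀| = c := abs_of_nonneg hc0
    linarith [hac ▸ h]
  set δ : ℝ := c / (2 * M) with hδdef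
  have hδ0 : 0 < δ := by positivity
  have hδhalf : δ ≤ 1 / 2 := by
    rw [hδdef, div_le_iff₀ (by positivity)]; linarith
  -- Lipschitz bound
  have hlip : ∀ x ∈ Set.Ioi (0:ℝ), |f x - c| ≤ M * |x - r₀| := by
    intro x hx
    have := (convex_Ioi (0:ℝ)).norm_image_sub_le_of_norm_derivWithin_le
      (hf.differentiableOn one_ne_zero)
      (fun y hy => by
        have h := hbound y hy
        have := abs_nonneg (f y)
        simpa [Real.norm_eq_abs] using (by linarith : |derivWithin f (Set.Ioi 0) y| ≤ M))
      (Set.mem_Ioi.2 hr₀0) hx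
    simpa [Real.norm_eq_abs] using this
  have hhalf : ∀ x ∈ Set.Ioi (0:ℝ), |x - r₀| ≤ δ → c / 2 ≤ f x := by
    intro x hx hxd
    have h1 := hlip x hx
    have h2 : M * |x - r₀| ≤ M * δ := by
      exact mul_le_mul_of_nonneg_left hxd hM.le
    have h3 : M * δ = c / 2 := by
      rw [hδdef]; field_simp
    have := abs_le.1 (h1.trans (h2.trans_eq h3))
    linarith [this.1]
  -- key integral estimate
  have key : ∀ a b : ℝ, 0 < a → a ≤ b →
      (∀ r ∈ Set.Icc a b, (c / 2) ^ 2 * r₀ ^ w ≤ r ^ (2 * (1 + α - ε)) * f r ^ 2 * r) →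
      (c / 2) ^ 2 * r₀ ^ w * (b - a) ≤ B ^ 2 := by
    intro a b ha hab hpt
    have h1 : ENNReal.ofReal ((c / 2) ^ 2 * r₀ ^ w) * volume (Set.Icc a b)
        ≤ ∫⁻ r in Set.Icc a b, ENNReal.ofReal (r ^ (2 * (1 + α - ε)) * f r ^ 2 * r) := by
      rw [← setLIntegral_const]
      refine lintegral_mono_ae ?_
      filter_upwards [ae_restrict_mem measurableSet_Icc] with r hr
      exact ENNReal.ofReal_le_ofReal (hpt r hr)
    have h2 : (∫⁻ r in Set.Icc a b, ENNReal.ofReal (r ^ (2 * (1 + α - ε)) * f r ^ 2 * r))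
        ≤ ∫⁻ r in Set.Ioi (0:ℝ), ENNReal.ofReal (r ^ (2 * (1 + α - ε)) * f r ^ 2 * r) :=
      lintegral_mono_set (fun r hr => lt_of_lt_of_le ha hr.1)
    have h3 := (h1.trans (h2.trans hL2))
    rw [Real.volume_Icc, ← ENNReal.ofReal_mul (by positivity)] at h3
    exact (ENNReal.ofReal_le_ofReal_iff (by positivity)).1 h3
  -- pointwise bound helper
  have hpoint : ∀ r : ℝ, 0 < r → c / 2 ≤ f r → r₀ ^ w ≤ r ^ w →
      (c / 2) ^ 2 * r₀ ^ w ≤ r ^ (2 * (1 + α - ε)) * f r ^ 2 * r := by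
    intro r hr0 hfr hwr
    have hrw_eq : r ^ (2 * (1 + α - ε)) * r = r ^ w := by
      calc r ^ (2 * (1 + α - ε)) * r = r ^ (2 * (1 + α - ε)) * r ^ (1:ℝ) := by
            rw [Real.rpow_one]
        _ = r ^ (2 * (1 + α - ε) + 1) := (Real.rpow_add hr0 _ _).symm
        _ = r ^ w := by rw [hw]; congr 1; ring
    calc (c / 2) ^ 2 * r₀ ^ w ≤ f r ^ 2 * r ^ w := by
          apply mul_le_mul (pow_le_pow_left₀ (by positivity) hfr 2) hwr hrw.le (by positivity)
      _ = r ^ (2 * (1 + α - ε)) * f r ^ 2 * r := by rw [← hrw_eq]; ring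
  have hfinal : (c / 2) ^ 2 * r₀ ^ w * δ ≤ B ^ 2 := by
    rcases le_or_gt 0 w with hwpos | hwneg
    · have := key r₀ (r₀ + δ) hr₀0 (by linarith) (fun r hr => by
        have hr0 : 0 < r := lt_of_lt_of_le hr₀0 hr.1
        refine hpoint r hr0 (hhalf r hr0 ?_) (Real.rpow_le_rpow hr₀0.le hr.1 hwpos)
        rw [abs_le]; constructor <;> [linarith [hr.1]; linarith [hr.2]])
      simpa using this
    · have ha0 : (0:ℝ) < r₀ - δ := by linarith
      have := key (r₀ - δ) r₀ ha0 (by linarith) (fun r hr => by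
        have hr0 : 0 < r := lt_of_lt_of_le ha0 hr.1
        refine hpoint r hr0 (hhalf r hr0 ?_) (Real.rpow_le_rpow_of_nonpos hr0 hr.2 hwneg.le)
        rw [abs_le]; constructor <;> [linarith [hr.1]; linarith [hr.2]])
      simpa using this
  -- conclude
  rw [le_div_iff₀ hrw]
  have heq : (c / 2) ^ 2 * r₀ ^ w * δ = c ^ 3 * r₀ ^ w / (8 * M) := by
    rw [hδdef]; field_simp; ring
  rw [heq] at hfinal
  have := (div_le_iff₀ (by positivity : (0:ℝ) < 8 * M)).1 hfinal
  nlinarith [this]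
end
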